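/- Let m and n be positive integers, and set ζ_n = exp(2πi/n) and ζ_m = exp(2πi/m) in ℂ. If ζ_n + ζ_n⁻¹ belongs to the subfield ℚ(ζ_m) of ℂ, then at least one of the following holds: (i) n ∈ {1, 2, 3, 4, 6}; (ii) n divides m; (iii) n is even, n/2 is odd, and n/2 divides m. -/

import Mathlib

lemma aux_T1 (L : ℕ) : ∀ m : ℕ, 0 < m → m ∣ L → Nat.totient L = Nat.totient m →
    L = m ∨ (L = 2 * m ∧ Odd m) := by
  induction L using Nat.strong_induction_on with
  | _ L ih =>
    intro m hm hdvd htot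
    have htm : 0 < Nat.totient m := Nat.totient_pos.2 hm
    obtain ⟨k, rfl⟩ := hdvd
    rcases eq_or_ne k 1 with rfl | hk1
    · left; simp
    have hk0 : k ≠ 0 := by rintro rfl; simp at htot; omega
    obtain ⟨p, hp, hpk⟩ := Nat.exists_prime_and_dvd hk1
    have hmp : m * p ∣ m * k := mul_dvd_mul_left m hpk
    have heq : Nat.totient (m * p) = Nat.totient m :=
      Nat.dvd_antisymm (htot ▸ Nat.totient_dvd_of_dvd hmp)
        (Nat.totient_dvd_of_dvd ⟨p, rfl⟩)
    have hpm : ¬ p ∣ m := by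
      intro hpm
      rw [mul_comm, Nat.totient_mul_of_prime_of_dvd hp hpm] at heq
      have := hp.two_le
      nlinarith
    have hco : Nat.Coprime m p := ((Nat.Prime.coprime_iff_not_dvd hp).mpr hpm).symm
    rw [Nat.totient_mul hco, Nat.totient_prime hp] at heq
    have h2le := hp.two_le
    have hp2 : p = 2 := by
      rcases Nat.lt_or_ge p 3 with h | h
      · omega
      · have : Nat.totient m * 2 ≤ Nat.totient m * (p - 1) :=
          Nat.mul_le_mul_left _ (by omega)
        omega
    subst hp2
    have hmodd : Odd m := Nat.odd_iff.mpr (by omega)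
    obtain ⟨k', rfl⟩ := hpk
    have hk'0 : 0 < k' := by omega
    have htot' : Nat.totient (m * k') = Nat.totient m := by
      refine Nat.dvd_antisymm ?_ (Nat.totient_dvd_of_dvd ⟨k', rfl⟩)
      exact htot ▸ Nat.totient_dvd_of_dvd (mul_dvd_mul_left m ⟨2, by ring⟩)
    have hlt : m * k' < m * (2 * k') := by
      have : k' < 2 * k' := by omega
      exact (Nat.mul_lt_mul_left hm).mpr this
    rcases ih (m * k') hlt m hm ⟨k', rfl⟩ htot' with h' | ⟨h', _⟩
    · have : k' = 1 := by
        have := mul_left_cancel₀ hm.ne' (h'.trans (mul_one m).symm)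
        exact this
      right
      exact ⟨by rw [this]; ring, hmodd⟩
    · exfalso
      have hk'2 : k' = 2 := mul_left_cancel₀ hm.ne' (h'.trans (by ring))
      subst hk'2
      have hco4 : Nat.Coprime m 4 := by
        have h2 : Nat.Coprime 2 m :=
          (Nat.Prime.coprime_iff_not_dvd Nat.prime_two).mpr (by omega)
        have := Nat.Coprime.pow_left 2 h2
        exact this.symm
      have h4 : Nat.totient 4 = 2 := by decide
      have : Nat.totient (m * 4) = Nat.totient m * 2 := by
        rw [Nat.totient_mul hco4, h4]
      rw [show m * (2 * 2) = m * 4 by ring] at htot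
      omega

lemma aux_T2 {n : ℕ} (h : Nat.totient n = 2) : n = 3 ∨ n = 4 ∨ n = 6 := by
  have hn0 : n ≠ 0 := by rintro rfl; simp at h
  have hdvd12 : n ∣ 12 := by
    rw [← Nat.factorization_le_iff_dvd hn0 (by norm_num)]
    intro p
    by_cases hp : p.Prime
    · rcases Nat.lt_or_ge (n.factorization p) 1 with h0 | h1
      · omega
      have hpn : p ∣ n := Nat.dvd_of_mem_primeFactors (by
        rw [Nat.mem_primeFactors]
        exact ⟨hp, Nat.dvd_of_factorization_pos (by omega), hn0⟩)
      have hptot : (p - 1) ∣ 2 := by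
        have := Nat.totient_dvd_of_dvd hpn
        rw [h, Nat.totient_prime hp] at this
        exact this
      have hple : p ≤ 3 := by
        have := Nat.le_of_dvd (by norm_num) hptot
        omega
      have h12 : (Nat.factorization 12) 3 = 1 ∧ (Nat.factorization 12) 2 = 2 := by
        have h' : (12:ℕ) = 2^2 * 3 := rfl
        rw [h', Nat.factorization_mul (by norm_num) (by norm_num), Nat.factorization_pow]
        simp [Nat.Prime.factorization Nat.prime_two, Nat.Prime.factorization Nat.prime_three]
      have h2le := hp.two_le
      interval_cases p
      · -- p = 2 : show factorization ≤ 12.factorization 2 = 2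
        rw [h12.2]
        by_contra hcon
        have h3 : 3 ≤ n.factorization 2 := by omega
        have h8 : 8 ∣ n := by
          calc (8:ℕ) = 2 ^ 3 := by norm_num
          _ ∣ 2 ^ (n.factorization 2) := pow_dvd_pow 2 h3
          _ ∣ n := Nat.ordProj_dvd n 2
        have := Nat.totient_dvd_of_dvd h8
        rw [h] at this
        have : (8 : ℕ).totient ≤ 2 := Nat.le_of_dvd (by norm_num) this
        norm_num [show (8:ℕ).totient = 4 from by decide] at this
      · -- p = 3
        rw [h12.1]
        by_contra hcon
        have h3 : 2 ≤ n.factorization 3 := by omega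
        have h9 : 9 ∣ n := by
          calc (9:ℕ) = 3 ^ 2 := by norm_num
          _ ∣ 3 ^ (n.factorization 3) := pow_dvd_pow 3 h3
          _ ∣ n := Nat.ordProj_dvd n 3
        have := Nat.totient_dvd_of_dvd h9
        rw [h] at this
        have : (9 : ℕ).totient ≤ 2 := Nat.le_of_dvd (by norm_num) this
        norm_num [show (9:ℕ).totient = 6 from by decide] at this
    · simp [Nat.factorization_eq_zero_of_not_prime n hp]
  have hle : n ≤ 12 := Nat.le_of_dvd (by norm_num) hdvd12
  interval_cases n <;> revert h <;> decide


lemma aux_lcm_asym {n m : ℕ} (hn : 0 < n) (hm : 0 < m) (hg : Nat.gcd n m = 2)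
    (h4 : ¬ 4 ∣ n) : Nat.totient (Nat.lcm n m) = Nat.totient n * Nat.totient m := by
  have h2n : 2 ∣ n := hg ▸ Nat.gcd_dvd_left n m
  obtain ⟨u, rfl⟩ := h2n
  have hu : Odd u := by
    rcases Nat.even_or_odd u with he | ho
    · exact absurd (by obtain ⟨v, rfl⟩ := he; exact ⟨v, by ring⟩) h4
    · exact ho
  have huco2 : Nat.Coprime 2 u := (Nat.Prime.coprime_iff_not_dvd Nat.prime_two).mpr
    (by rw [Nat.odd_iff] at hu; omega)
  have hucom : Nat.Coprime u m := by
    have h1 : Nat.gcd u m ∣ 2 := hg ▸ Nat.dvd_gcd ((Nat.gcd_dvd_left u m).trans ⟨2, by ring⟩)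
      (Nat.gcd_dvd_right u m)
    have h2 : ¬ 2 ∣ Nat.gcd u m := fun hd =>
      (by rw [Nat.odd_iff] at hu; omega : ¬ 2 ∣ u) (hd.trans (Nat.gcd_dvd_left u m))
    rcases (Nat.Prime.eq_one_or_self_of_dvd Nat.prime_two _ h1).symm with h | h
    · exact absurd (h ▸ dvd_refl _) h2
    · exact h
  have hlcm : Nat.lcm (2 * u) m = u * m := by
    have := Nat.gcd_mul_lcm (2 * u) m
    rw [hg] at this
    have hm2 : 2 * (u * m) = 2 * Nat.lcm (2*u) m := by rw [this]; ring
    omega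
  rw [hlcm, Nat.totient_mul hucom, Nat.totient_mul huco2, Nat.totient_two, one_mul]

lemma aux_lcm_tot {n m : ℕ} (hn : 0 < n) (hm : 0 < m) (hg : Nat.gcd n m ∣ 2) :
    Nat.totient (Nat.lcm n m) = Nat.totient n * Nat.totient m := by
  rcases (Nat.Prime.eq_one_or_self_of_dvd Nat.prime_two _ hg) with h1 | h2
  · rw [Nat.Coprime.lcm_eq_mul h1, Nat.totient_mul h1]
  · have h4 : ¬ 4 ∣ n ∨ ¬ 4 ∣ m := by
      by_contra hc
      push_neg at hc
      have : 4 ∣ Nat.gcd n m := Nat.dvd_gcd hc.1 hc.2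
      rw [h2] at this
      omega
    rcases h4 with h | h
    · exact aux_lcm_asym hn hm h2 h
    · rw [Nat.lcm_comm, Nat.mul_comm (Nat.totient n)]
      exact aux_lcm_asym hm hn (Nat.gcd_comm n m ▸ h2) h


open IntermediateField Polynomial

set_option maxHeartbeats 1000000 in
set_option synthInstance.maxHeartbeats 400000 in

/-- If `ζ_n + ζ_n⁻¹` lies in `ℚ(ζ_m)`, then `n ∈ {1,2,3,4,6}`,
or `n ∣ m`, or `n` is even, `n/2` is odd and `n/2 ∣ m`. -/
theorem zeta_sum_mem_cyclotomic_field (m n : ℕ) (hm : 0 < m) (hn : 0 < n)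
    (ζn ζm : ℂ)
    (hζn : ζn = Complex.exp (2 * Real.pi * Complex.I / n))
    (hζm : ζm = Complex.exp (2 * Real.pi * Complex.I / m))
    (h : ζn + ζn⁻¹ ∈ IntermediateField.adjoin ℚ {ζm}) :
    n ∈ ({1, 2, 3, 4, 6} : Set ℕ) ∨ n ∣ m ∨ (Even n ∧ Odd (n / 2) ∧ (n / 2) ∣ m) := by
  set L : ℕ := Nat.lcm n m with hLdef
  have hnL : n ∣ L := Nat.dvd_lcm_left n m
  have hmL : m ∣ L := Nat.dvd_lcm_right n m
  have hL : 0 < L := Nat.pos_of_ne_zero (Nat.lcm_ne_zero hn.ne' hm.ne')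
  set ζL : ℂ := Complex.exp (2 * Real.pi * Complex.I / L) with hζLdef
  have hζLprim : IsPrimitiveRoot ζL L := Complex.isPrimitiveRoot_exp L hL.ne'
  have hζL0 : ζL ≠ 0 := Complex.exp_ne_zero _
  have hζn0 : ζn ≠ 0 := hζn ▸ Complex.exp_ne_zero _
  -- power relations
  have key : ∀ a : ℕ, 0 < a → a ∣ L → ζL ^ (L / a) = Complex.exp (2 * Real.pi * Complex.I / a) := by
    intro a ha hdvd
    have hk0 : 0 < L / a := Nat.div_pos (Nat.le_of_dvd hL hdvd) ha
    have h1 : (L : ℂ) = (a : ℂ) * ((L / a : ℕ) : ℂ) := by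
      rw [← Nat.cast_mul, Nat.mul_div_cancel' hdvd]
    rw [← Complex.exp_nat_mul]
    congr 1
    have ha' : (a : ℂ) ≠ 0 := Nat.cast_ne_zero.2 ha.ne'
    have hk' : ((L / a : ℕ) : ℂ) ≠ 0 := Nat.cast_ne_zero.2 hk0.ne'
    have hL' : (L : ℂ) ≠ 0 := Nat.cast_ne_zero.2 hL.ne'
    field_simp
    rw [h1]
    ring
  have hLn : ζL ^ (L / n) = ζn := by rw [key n hn hnL, hζn]
  have hLm : ζL ^ (L / m) = ζm := by rw [key m hm hmL, hζm]
  -- Bezout: ζL is a product of integer powers of ζn and ζm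
  have hco : Nat.Coprime (L / n) (L / m) := by
    have hdn := Nat.gcd_dvd_left (L / n) (L / m)
    have hdm := Nat.gcd_dvd_right (L / n) (L / m)
    set d := Nat.gcd (L / n) (L / m) with hddef
    have hLn' : 0 < L / n := Nat.div_pos (Nat.le_of_dvd hL hnL) hn
    have hd0 : 0 < d := Nat.gcd_pos_of_pos_left _ hLn'
    have h1 : L / d = n * ((L / n) / d) := by
      rw [← Nat.mul_div_assoc n hdn, Nat.mul_div_cancel' hnL]
    have h2 : L / d = m * ((L / m) / d) := by
      rw [← Nat.mul_div_assoc m hdm, Nat.mul_div_cancel' hmL]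
    have hLd : L ∣ L / d := Nat.lcm_dvd ⟨_, h1⟩ ⟨_, h2⟩
    have hle : L ≤ L / d :=
      Nat.le_of_dvd (Nat.div_pos (le_trans (Nat.le_of_dvd hLn' hdn)
        (Nat.div_le_self L n)) hd0) hLd
    have heq : L / d = L := le_antisymm (Nat.div_le_self L d) hle
    rcases Nat.div_eq_self.mp heq with h' | h'
    · omega
    · exact h'
  have hbez : ∃ u v : ℤ, ζL = ζn ^ u * ζm ^ v := by
    refine ⟨Nat.gcdA (L / n) (L / m), Nat.gcdB (L / n) (L / m), ?_⟩
    have hb := Nat.gcd_eq_gcd_ab (L / n) (L / m)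
    rw [hco] at hb
    calc ζL = ζL ^ (1 : ℤ) := (zpow_one ζL).symm
    _ = ζL ^ (((L / n : ℕ) : ℤ) * Nat.gcdA (L / n) (L / m)
        + ((L / m : ℕ) : ℤ) * Nat.gcdB (L / n) (L / m)) := by rw [← hb]; norm_num
    _ = (ζL ^ ((L / n : ℕ) : ℤ)) ^ Nat.gcdA (L / n) (L / m)
        * (ζL ^ ((L / m : ℕ) : ℤ)) ^ Nat.gcdB (L / n) (L / m) := by
        rw [zpow_add₀ hζL0, zpow_mul, zpow_mul]
    _ = ζn ^ Nat.gcdA (L / n) (L / m) * ζm ^ Nat.gcdB (L / n) (L / m) := by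
        rw [zpow_natCast, zpow_natCast, hLn, hLm]
  -- the field K = ℚ(ζm)
  have hζmprim : IsPrimitiveRoot ζm m := by
    rw [hζm]; exact Complex.isPrimitiveRoot_exp m hm.ne'
  set K : IntermediateField ℚ ℂ := IntermediateField.adjoin ℚ {ζm} with hKdef
  set s : K := ⟨ζn + ζn⁻¹, h⟩ with hsdef
  set q : Polynomial K := X ^ 2 + C (-s) * X + C 1 with hqdef
  have hqmonic : q.Monic := by
    rw [hqdef, add_assoc]
    apply Polynomial.monic_X_pow_add
    calc degree (C (-s) * X + C 1) ≤ 1 := Polynomial.degree_linear_le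
    _ < 2 := by norm_num
  have hqdeg : q.natDegree = 2 := by
    have : q = C 1 * X ^ 2 + C (-s) * X + C 1 := by rw [hqdef, map_one, one_mul]
    rw [this, Polynomial.natDegree_quadratic one_ne_zero]
  have hsval : (algebraMap K ℂ) s = ζn + ζn⁻¹ := rfl
  have haev : (Polynomial.aeval ζn) q = 0 := by
    simp only [hqdef, map_add, map_mul, map_pow, Polynomial.aeval_X, Polynomial.aeval_C, map_neg,
      hsval, map_one]
    field_simp
    ring
  have hint : IsIntegral K ζn := ⟨q, hqmonic, haev⟩
  have hmdvd : minpoly K ζn ∣ q := minpoly.dvd K ζn haev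
  -- the extension E = K(ζn)
  have hfd : FiniteDimensional K K⟮ζn⟯ := IntermediateField.adjoin.finiteDimensional hint
  have hdeg : Module.finrank K K⟮ζn⟯ = (minpoly K ζn).natDegree :=
    IntermediateField.adjoin.finrank hint
  have hle2 : Module.finrank K K⟮ζn⟯ ≤ 2 := by
    rw [hdeg, ← hqdeg]
    exact Polynomial.natDegree_le_of_dvd hmdvd hqmonic.ne_zero
  have hge1 : 0 < Module.finrank K K⟮ζn⟯ := Module.finrank_pos
  -- restrict scalars : K(ζn) = ℚ(ζL)
  have hA : (IntermediateField.adjoin K {ζn}).restrictScalars ℚ =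
      IntermediateField.adjoin ℚ {ζL} := by
    refine Eq.trans (IntermediateField.adjoin_adjoin_left (F := ℚ) (S := {ζm}) {ζn}) ?_
    apply le_antisymm
    · rw [IntermediateField.adjoin_le_iff]
      rintro x (rfl | rfl)
      · have := pow_mem (IntermediateField.subset_adjoin ℚ {ζL} rfl) (L / m)
        rwa [hLm] at this
      · have := pow_mem (IntermediateField.subset_adjoin ℚ {ζL} rfl) (L / n)
        rwa [hLn] at this
    · rw [IntermediateField.adjoin_le_iff, Set.singleton_subset_iff]
      obtain ⟨u, v, huv⟩ := hbez
      rw [SetLike.mem_coe, huv]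
      refine mul_mem (zpow_mem ?_ u) (zpow_mem ?_ v)
      · exact IntermediateField.subset_adjoin ℚ _ (Set.mem_union_right _ rfl)
      · exact IntermediateField.subset_adjoin ℚ _ (Set.mem_union_left _ rfl)
  -- degrees
  have hKrank : Module.finrank ℚ K = Nat.totient m := by
    rw [hKdef, IntermediateField.adjoin.finrank ((hζmprim.isIntegral hm).tower_top (A := ℚ)),
      ← Polynomial.cyclotomic_eq_minpoly_rat hζmprim hm, Polynomial.natDegree_cyclotomic]
  have hLrank : Module.finrank ℚ (IntermediateField.adjoin ℚ {ζL}) = Nat.totient L := by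
    rw [IntermediateField.adjoin.finrank ((hζLprim.isIntegral hL).tower_top (A := ℚ)),
      ← Polynomial.cyclotomic_eq_minpoly_rat hζLprim hL, Polynomial.natDegree_cyclotomic]
  have hprod : Nat.totient m * Module.finrank K K⟮ζn⟯ = Nat.totient L := by
    rw [← hKrank, ← hLrank, ← hA]
    exact Module.finrank_mul_finrank ℚ K K⟮ζn⟯
  -- main case split
  have hd12 : Module.finrank K K⟮ζn⟯ = 1 ∨ Module.finrank K K⟮ζn⟯ = 2 := by omega
  rcases hd12 with hd | hd
  · -- degree 1
    rw [hd] at hprod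
    rw [mul_one] at hprod
    rcases aux_T1 L m hm hmL hprod.symm with hLm' | ⟨hL2m, hmodd⟩
    · right; left; exact hLm' ▸ hnL
    · by_cases hnm : n ∣ m
      · right; left; exact hnm
      right; right
      have hn2m : n ∣ 2 * m := hL2m ▸ hnL
      have hneven : Even n := by
        by_contra hodd
        have hn2 : ¬ 2 ∣ n := by rw [Nat.even_iff] at hodd; omega
        have hcop : Nat.Coprime n 2 :=
          ((Nat.Prime.coprime_iff_not_dvd Nat.prime_two).mpr hn2).symm
        rw [mul_comm] at hn2m
        exact hnm (hcop.dvd_of_dvd_mul_right hn2m)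
      obtain ⟨u, hu⟩ := hneven
      have hn2u : n = 2 * u := by omega
      have hum : u ∣ m := by
        have h2u : 2 * u ∣ 2 * m := hn2u ▸ hn2m
        exact (mul_dvd_mul_iff_left (two_ne_zero)).mp h2u
      have huodd : Odd u := by
        rcases Nat.even_or_odd u with he | ho
        · exfalso
          have h2m : 2 ∣ m := dvd_trans he.two_dvd hum
          rw [Nat.odd_iff] at hmodd
          omega
        · exact ho
      have hdiv : n / 2 = u := by rw [hn2u]; omega
      exact ⟨⟨u, hu⟩, hdiv ▸ huodd, hdiv ▸ hum⟩
  · -- degree 2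
    have hmdeg : (minpoly K ζn).natDegree = 2 := by rw [← hdeg, hd]
    have hmin0 : minpoly K ζn ≠ 0 := minpoly.ne_zero hint
    have hminq : minpoly K ζn = q := by
      obtain ⟨c, hc⟩ := hmdvd
      have hq0 : q ≠ 0 := hqmonic.ne_zero
      have hc0 : c ≠ 0 := by rintro rfl; rw [mul_zero] at hc; exact hq0 hc
      have hdegc : c.natDegree = 0 := by
        have hnd := Polynomial.natDegree_mul hmin0 hc0
        rw [← hc, hqdeg, hmdeg] at hnd
        omega
      have hlead := congrArg Polynomial.leadingCoeff hc
      rw [Polynomial.leadingCoeff_mul, (minpoly.monic hint).leadingCoeff, one_mul,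
        hqmonic.leadingCoeff, Polynomial.leadingCoeff, hdegc] at hlead
      have hcC : c = 1 := by
        rw [Polynomial.eq_C_of_natDegree_eq_zero hdegc, ← hlead, map_one]
      rw [hc, hcC, mul_one]
    have haev2 : (Polynomial.aeval ζn⁻¹) q = 0 := by
      simp only [hqdef, map_add, map_mul, map_pow, Polynomial.aeval_X, Polynomial.aeval_C,
        map_neg, hsval, map_one]
      field_simp
      ring
    have hroot : ζn⁻¹ ∈ (minpoly K ζn).aroots ℂ := by
      rw [Polynomial.mem_aroots]
      exact ⟨hmin0, hminq ▸ haev2⟩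
    set σ : K⟮ζn⟯ →ₐ[K] ℂ :=
      (IntermediateField.algHomAdjoinIntegralEquiv K hint).symm ⟨ζn⁻¹, hroot⟩ with hσ
    have hσgen : σ (IntermediateField.AdjoinSimple.gen K ζn) = ζn⁻¹ :=
      IntermediateField.algHomAdjoinIntegralEquiv_symm_apply_gen K hint _
    have hζmK : ζm ∈ K := IntermediateField.subset_adjoin ℚ {ζm} rfl
    have hζLE : ζL ∈ IntermediateField.adjoin K {ζn} := by
      obtain ⟨u, v, huv⟩ := hbez
      rw [huv]
      refine mul_mem (zpow_mem (IntermediateField.subset_adjoin K {ζn} rfl) u)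
        (zpow_mem ?_ v)
      have hmem := IntermediateField.algebraMap_mem
        (IntermediateField.adjoin K {ζn}) (⟨ζm, hζmK⟩ : K)
      exact hmem
    set z : K⟮ζn⟯ := ⟨ζL, hζLE⟩ with hz
    have hzprim : IsPrimitiveRoot z L :=
      IsPrimitiveRoot.coe_submonoidClass_iff.mp hζLprim
    have hσinj : Function.Injective σ := σ.toRingHom.injective
    have hwprim : IsPrimitiveRoot (σ z) L := hzprim.map_of_injective hσinj
    haveI : NeZero L := ⟨hL.ne'⟩
    obtain ⟨x, hxlt, hxeq⟩ := hζLprim.eq_pow_of_pow_eq_one hwprim.pow_eq_one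
    have hmod : ∀ a b : ℕ, ζL ^ a = ζL ^ b → (L : ℤ) ∣ (a : ℤ) - b := by
      intro a b hab
      have h1 : ζL ^ ((a : ℤ) - b) = 1 := by
        rw [zpow_sub₀ hζL0, zpow_natCast, zpow_natCast, hab,
          div_self (pow_ne_zero _ hζL0)]
      exact (hζLprim.zpow_eq_one_iff_dvd _).mp h1
    -- congruence mod m
    have hzm : σ (z ^ (L / m)) = ζm := by
      have h1 : z ^ (L / m) = algebraMap K K⟮ζn⟯ ⟨ζm, hζmK⟩ := by
        apply Subtype.ext
        push_cast
        exact hLm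
      rw [h1, σ.commutes]
      rfl
    have hc1 : ζL ^ (x * (L / m)) = ζL ^ (L / m) := by
      rw [pow_mul, hxeq, ← map_pow, hzm, hLm]
    have hLmpos : 0 < L / m := Nat.div_pos (Nat.le_of_dvd hL hmL) hm
    have hLnpos : 0 < L / n := Nat.div_pos (Nat.le_of_dvd hL hnL) hn
    have hLm0 : ((L / m : ℕ) : ℤ) ≠ 0 := Int.natCast_ne_zero.mpr hLmpos.ne'
    have hLn0 : ((L / n : ℕ) : ℤ) ≠ 0 := Int.natCast_ne_zero.mpr hLnpos.ne'
    have hdm : (m : ℤ) ∣ (x : ℤ) - 1 := by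
      have h2 := hmod (x * (L / m)) (L / m) hc1
      have h3 : ((x * (L / m) : ℕ) : ℤ) - ((L / m : ℕ) : ℤ)
          = ((x : ℤ) - 1) * ((L / m : ℕ) : ℤ) := by push_cast; ring
      rw [h3] at h2
      have h4 : (L : ℤ) = (m : ℤ) * ((L / m : ℕ) : ℤ) := by
        rw [← Nat.cast_mul, Nat.mul_div_cancel' hmL]
      rw [h4] at h2
      exact (mul_dvd_mul_iff_right hLm0).mp h2
    -- congruence mod n
    have hzn : z ^ (L / n) = IntermediateField.AdjoinSimple.gen K ζn := by
      apply Subtype.ext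
      push_cast
      exact hLn
    have hc2 : ζL ^ (x * (L / n)) * ζL ^ (L / n) = 1 := by
      rw [pow_mul, hxeq, ← map_pow, hzn, hσgen, hLn]
      exact inv_mul_cancel₀ hζn0
    have hdn' : (n : ℤ) ∣ (x : ℤ) + 1 := by
      have h1 : ζL ^ (((x : ℤ) + 1) * ((L / n : ℕ) : ℤ)) = 1 := by
        have h5 : ((x : ℤ) + 1) * ((L / n : ℕ) : ℤ)
            = ((x * (L / n) : ℕ) : ℤ) + ((L / n : ℕ) : ℤ) := by push_cast; ring
        rw [h5, zpow_add₀ hζL0, zpow_natCast, zpow_natCast]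
        exact hc2
      have h2 := (hζLprim.zpow_eq_one_iff_dvd _).mp h1
      have h4 : (L : ℤ) = (n : ℤ) * ((L / n : ℕ) : ℤ) := by
        rw [← Nat.cast_mul, Nat.mul_div_cancel' hnL]
      rw [h4] at h2
      exact (mul_dvd_mul_iff_right hLn0).mp h2
    -- gcd divides 2
    have hg2 : Nat.gcd n m ∣ 2 := by
      have hgn : (Nat.gcd n m : ℤ) ∣ (x : ℤ) + 1 :=
        dvd_trans (Int.natCast_dvd_natCast.mpr (Nat.gcd_dvd_left n m)) hdn'
      have hgm : (Nat.gcd n m : ℤ) ∣ (x : ℤ) - 1 :=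
        dvd_trans (Int.natCast_dvd_natCast.mpr (Nat.gcd_dvd_right n m)) hdm
      have hsub := dvd_sub hgn hgm
      have heq2 : (x : ℤ) + 1 - ((x : ℤ) - 1) = 2 := by ring
      rw [heq2] at hsub
      exact_mod_cast hsub
    have htotL : Nat.totient L = Nat.totient n * Nat.totient m := aux_lcm_tot hn hm hg2
    rw [hd, htotL] at hprod
    have htm : 0 < Nat.totient m := Nat.totient_pos.2 hm
    have hφn : Nat.totient n = 2 := by
      rw [mul_comm (Nat.totient n) (Nat.totient m)] at hprod
      exact (Nat.eq_of_mul_eq_mul_left htm hprod).symm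
    rcases aux_T2 hφn with rfl | rfl | rfl <;> · left; simp
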